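/- Let c > 0 and let a : ℝ → ℝ³ be C¹ with ‖a'(t)‖ < c on [t_min, t_max]. Fix x ∈ ℝ³ and let T(t) = t + c⁻¹‖x − a(t)‖. Then for all s, t ∈ [t_min, t_max] with s < t, (t − s)(1 − c⁻¹ sup_{τ∈[s,t]} ‖a'(τ)‖) ≤ T(t) − T(s) ≤ (t − s)(1 + c⁻¹ sup_{τ∈[s,t]} ‖a'(τ)‖). -/

import Mathlib

theorem arrival_time_biLipschitz
    (c tmin tmax : ℝ) (hc : 0 < c)
    (a : ℝ → EuclideanSpace ℝ (Fin 3))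
    (ha : ContDiff ℝ 1 a)
    (hsub : ∀ t ∈ Set.Icc tmin tmax, ‖deriv a t‖ < c)
    (x : EuclideanSpace ℝ (Fin 3))
    (T : ℝ → ℝ) (hT : ∀ t, T t = t + c⁻¹ * ‖x - a t‖) :
    ∀ s ∈ Set.Icc tmin tmax, ∀ t ∈ Set.Icc tmin tmax, s < t →
      (t - s) * (1 - c⁻¹ * sSup ((fun τ => ‖deriv a τ‖) '' Set.Icc s t)) ≤ T t - T s ∧
      T t - T s ≤ (t - s) * (1 + c⁻¹ * sSup ((fun τ => ‖deriv a τ‖) '' Set.Icc s t)) := by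
  intro s hs t ht hst
  set M := sSup ((fun τ => ‖deriv a τ‖) '' Set.Icc s t) with hM
  have hcont : Continuous (deriv a) := ha.continuous_deriv le_rfl
  have hbdd : BddAbove ((fun τ => ‖deriv a τ‖) '' Set.Icc s t) :=
    isCompact_Icc.bddAbove_image hcont.norm.continuousOn
  have hle : ∀ τ ∈ Set.Icc s t, ‖deriv a τ‖ ≤ M := fun τ hτ =>
    le_csSup hbdd ⟨τ, hτ, rfl⟩
  have hder : ∀ τ ∈ Set.Icc s t, HasDerivWithinAt a (deriv a τ) (Set.Icc s t) τ :=
    fun τ _ => ((ha.differentiable one_ne_zero) τ).hasDerivAt.hasDerivWithinAt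
  have key : ‖a t - a s‖ ≤ M * (t - s) := by
    have := norm_image_sub_le_of_norm_deriv_le_segment' hder
      (fun τ hτ => hle τ (Set.Ico_subset_Icc_self hτ)) t ⟨hst.le, le_rfl⟩
    simpa using this
  have hnn : ∀ u v : ℝ, |‖x - a t‖ - ‖x - a s‖| ≤ ‖a t - a s‖ := by
    intro u v
    have h1 : (x - a t) - (x - a s) = a s - a t := by abel
    calc |‖x - a t‖ - ‖x - a s‖| ≤ ‖(x - a t) - (x - a s)‖ := abs_norm_sub_norm_le _ _
      _ = ‖a t - a s‖ := by rw [h1, norm_sub_rev]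
  have habs : |‖x - a t‖ - ‖x - a s‖| ≤ M * (t - s) := (hnn 0 0).trans key
  have habs' := abs_le.1 habs
  have hcinv : (0:ℝ) < c⁻¹ := inv_pos.2 hc
  have hTt := hT t
  have hTs := hT s
  constructor <;> nlinarith [habs'.1, habs'.2, hcinv.le, mul_le_mul_of_nonneg_left habs'.1 hcinv.le, mul_le_mul_of_nonneg_left habs'.2 hcinv.le]
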